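/- Let S and S' be self-similar Jordan zippers in ℝ^n whose attractors γ, γ' are arcs of bounded turning, with ratios p_i, q_i and equal signatures. Set α = min_i min(log p_i / log q_i, log q_i / log p_i). Then α ≤ 1, and α = 1 if and only if p_i = q_i for all i ∈ {1, ..., m}. Consequently, the agreeing homeomorphism f : γ → γ' is bi-Lipschitz if and only if p_i = q_i for all i (given the bounded turning hypotheses on both attractors). -/

import Mathlib

open Set Metric Bornology

/-- `S i`, for `i < m`, is a contracting similarity with ratio `r i ∈ (0,1)`. -/
def IsSimilaritySystem {X : Type*} [MetricSpace X] (m : ℕ)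
    (S : ℕ → X → X) (r : ℕ → ℝ) : Prop :=
  ∀ i < m, 0 < r i ∧ r i < 1 ∧ ∀ x y, dist (S i x) (S i y) = r i * dist x y

/-- Self-similar zipper with maps `S 0, …, S (m-1)`, ratios `r`, vertices `z 0, …, z m`,
signature `ε` (values in `{0,1}`).  Here `S i` plays the role of the map `S_{i+1}` of the
paper, so the zipper conditions read `S i (z 0) = z (i + ε i)` and
`S i (z m) = z (i + 1 - ε i)`. -/
def IsZipper {X : Type*} [MetricSpace X] (m : ℕ)
    (S : ℕ → X → X) (r : ℕ → ℝ) (z : ℕ → X) (ε : ℕ → ℕ) : Prop :=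
  1 ≤ m ∧ IsSimilaritySystem m S r ∧ (∀ i < m, ε i ≤ 1) ∧
    ∀ i < m, S i (z 0) = z (i + ε i) ∧ S i (z m) = z (i + 1 - ε i)

/-- Linear zipper on `[0,1]`, with vertices `0 = t 0 < t 1 < … < t m = 1`. -/
def IsLinearZipper (m : ℕ) (T : ℕ → ℝ → ℝ) (r : ℕ → ℝ) (t : ℕ → ℝ) (ε : ℕ → ℕ) : Prop :=
  IsZipper m T r t ε ∧ t 0 = 0 ∧ t m = 1 ∧ ∀ i < m, t i < t (i + 1)

/-- `K` is the attractor of the iterated function system `{S i : i < m}`. -/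
def IsAttractor {X : Type*} [MetricSpace X] (m : ℕ) (S : ℕ → X → X) (K : Set X) : Prop :=
  K.Nonempty ∧ IsCompact K ∧ K = ⋃ i ∈ Finset.range m, S i '' K

/-- `g` is a structural parametrization of the zipper `S` (with vertices `z`)
relative to the linear zipper `T` (with vertices `t`). -/
def IsStructuralParam {X : Type*} [MetricSpace X] (m : ℕ) (S : ℕ → X → X)
    (T : ℕ → ℝ → ℝ) (t : ℕ → ℝ) (z : ℕ → X) (g : ℝ → X) : Prop :=
  ContinuousOn g (Icc 0 1) ∧ (∀ i ≤ m, g (t i) = z i) ∧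
    ∀ i < m, ∀ x ∈ Icc (0:ℝ) 1, S i (g x) = g (T i x)

/-- A Jordan zipper: a zipper whose attractor `γ` is a Jordan arc, i.e. some structural
parametrization is injective on `[0,1]` (hence a homeomorphism onto `γ`). -/
def IsJordanZipper {X : Type*} [MetricSpace X] (m : ℕ) (S : ℕ → X → X) (r : ℕ → ℝ)
    (z : ℕ → X) (ε : ℕ → ℕ) (γ : Set X) : Prop :=
  IsZipper m S r z ε ∧ IsAttractor m S γ ∧
    ∃ T rT t g, IsLinearZipper m T rT t ε ∧ IsStructuralParam m S T t z g ∧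
      InjOn g (Icc 0 1) ∧ g '' Icc 0 1 = γ

/-- `g` is an injective continuous parametrization of the arc `γ` by `[0,1]`. -/
def IsArcParam {X : Type*} [MetricSpace X] (γ : Set X) (g : ℝ → X) : Prop :=
  ContinuousOn g (Icc 0 1) ∧ InjOn g (Icc 0 1) ∧ g '' Icc 0 1 = γ

/-- Bounded turning with constant `M`: every subarc `γ_{xy}` (expressed via any
parametrization of the arc) has diameter at most `M‖x - y‖`. -/
def BoundedTurning {X : Type*} [MetricSpace X] (γ : Set X) (M : ℝ) : Prop :=
  0 < M ∧ ∀ g : ℝ → X, IsArcParam γ g →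
    ∀ s ∈ Icc (0:ℝ) 1, ∀ u ∈ Icc (0:ℝ) 1, diam (g '' uIcc s u) ≤ M * dist (g s) (g u)

/-- `f` agrees with the systems `S` and `S'` on `γ`: `f ∘ S i = S' i ∘ f` on `γ`. -/
def Agrees {X Y : Type*} [MetricSpace X] [MetricSpace Y] (m : ℕ)
    (S : ℕ → X → X) (S' : ℕ → Y → Y) (γ : Set X) (f : X → Y) : Prop :=
  ∀ i < m, ∀ x ∈ γ, f (S i x) = S' i (f x)

/-- `f` restricts to a homeomorphism of the compact set `γ` onto `γ'`. -/
def IsHomeoOnto {X Y : Type*} [MetricSpace X] [MetricSpace Y]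
    (γ : Set X) (γ' : Set Y) (f : X → Y) : Prop :=
  ContinuousOn f γ ∧ InjOn f γ ∧ f '' γ = γ'

/-- Composition `S_{i₁} ∘ … ∘ S_{i_k}` along a multi-index (a list). -/
def compS {X : Type*} (S : ℕ → X → X) : List ℕ → X → X
  | [] => id
  | i :: l => S i ∘ compS S l

/-- Product of the ratios along a multi-index. -/
def ratioProd (p : ℕ → ℝ) (l : List ℕ) : ℝ := (l.map p).prod


lemma compS_append {X : Type*} (S : ℕ → X → X) (l₁ l₂ : List ℕ) :
    compS S (l₁ ++ l₂) = compS S l₁ ∘ compS S l₂ := by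
  induction l₁ with
  | nil => rfl
  | cons i l ih => funext x; simp [compS, ih]

lemma compS_singleton {X : Type*} (S : ℕ → X → X) (i : ℕ) : compS S [i] = S i := rfl

lemma ratioProd_nil (p : ℕ → ℝ) : ratioProd p [] = 1 := rfl

lemma ratioProd_cons (p : ℕ → ℝ) (i : ℕ) (l : List ℕ) :
    ratioProd p (i :: l) = p i * ratioProd p l := by
  simp [ratioProd]

lemma ratioProd_append (p : ℕ → ℝ) (l₁ l₂ : List ℕ) :
    ratioProd p (l₁ ++ l₂) = ratioProd p l₁ * ratioProd p l₂ := by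
  simp [ratioProd]

lemma ratioProd_singleton (p : ℕ → ℝ) (i : ℕ) : ratioProd p [i] = p i := by
  simp [ratioProd]

lemma ratioProd_pos {p : ℕ → ℝ} {l : List ℕ} (h : ∀ i ∈ l, 0 < p i) : 0 < ratioProd p l := by
  induction l with
  | nil => norm_num [ratioProd_nil]
  | cons i l ih =>
    rw [ratioProd_cons]
    exact mul_pos (h i (by simp)) (ih fun j hj => h j (by simp [hj]))

lemma ratioProd_congr {p q : ℕ → ℝ} {l : List ℕ} (h : ∀ i ∈ l, p i = q i) :
    ratioProd p l = ratioProd q l := by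
  induction l with
  | nil => rfl
  | cons i l ih =>
    rw [ratioProd_cons, ratioProd_cons, h i (by simp), ih fun j hj => h j (by simp [hj])]

lemma ratioProd_replicate (p : ℕ → ℝ) (i k : ℕ) :
    ratioProd p (List.replicate k i) = p i ^ k := by
  simp [ratioProd]

lemma compS_dist {X : Type*} [MetricSpace X] {S : ℕ → X → X} {p : ℕ → ℝ} {l : List ℕ}
    (h : ∀ i ∈ l, ∀ x y, dist (S i x) (S i y) = p i * dist x y) :
    ∀ x y, dist (compS S l x) (compS S l y) = ratioProd p l * dist x y := by
  induction l with
  | nil => intro x y; simp [compS, ratioProd_nil]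
  | cons i l ih =>
    intro x y
    have := h i (by simp)
    simp only [compS, Function.comp_apply, this, ratioProd_cons,
      ih fun j hj => h j (by simp [hj]), mul_assoc]

lemma diam_image_eq {X Y : Type*} [MetricSpace X] [MetricSpace Y] (F : X → Y) {r : ℝ}
    (hr : 0 < r) (h : ∀ x y, dist (F x) (F y) = r * dist x y) {A : Set X}
    (hA : IsBounded A) : diam (F '' A) = r * diam A := by
  have hbd : IsBounded (F '' A) := by
    rcases isBounded_iff.1 hA with ⟨C, hC⟩
    refine isBounded_iff.2 ⟨r * C, ?_⟩
    rintro _ ⟨x, hx, rfl⟩ _ ⟨y, hy, rfl⟩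
    rw [h]; exact mul_le_mul_of_nonneg_left (hC hx hy) hr.le
  apply le_antisymm
  · apply diam_le_of_forall_dist_le (by positivity)
    rintro _ ⟨x, hx, rfl⟩ _ ⟨y, hy, rfl⟩
    rw [h]; exact mul_le_mul_of_nonneg_left (dist_le_diam_of_mem hA hx hy) hr.le
  · rw [mul_comm, ← le_div_iff₀ hr]
    apply diam_le_of_forall_dist_le (by positivity)
    intro x hx y hy
    rw [le_div_iff₀ hr, mul_comm, ← h]
    exact dist_le_diam_of_mem hbd ⟨x, hx, rfl⟩ ⟨y, hy, rfl⟩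

lemma affine_of_dist {f : ℝ → ℝ} {r : ℝ} (hr : 0 < r)
    (h : ∀ x y, dist (f x) (f y) = r * dist x y) (x : ℝ) :
    f x = f 0 + (f 1 - f 0) * x := by
  have e0 := h x 0
  have e1 := h x 1
  have e2 := h 1 0
  simp only [Real.dist_eq] at e0 e1 e2
  have q0 : (f x - f 0) ^ 2 = r ^ 2 * x ^ 2 := by
    calc (f x - f 0) ^ 2 = |f x - f 0| ^ 2 := (sq_abs _).symm
      _ = (r * |x - 0|) ^ 2 := by rw [e0]
      _ = r ^ 2 * x ^ 2 := by rw [mul_pow, sq_abs]; ring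
  have q1 : (f x - f 1) ^ 2 = r ^ 2 * (x - 1) ^ 2 := by
    calc (f x - f 1) ^ 2 = |f x - f 1| ^ 2 := (sq_abs _).symm
      _ = (r * |x - 1|) ^ 2 := by rw [e1]
      _ = r ^ 2 * (x - 1) ^ 2 := by rw [mul_pow, sq_abs]
  have q2 : (f 1 - f 0) ^ 2 = r ^ 2 := by
    calc (f 1 - f 0) ^ 2 = |f 1 - f 0| ^ 2 := (sq_abs _).symm
      _ = (r * |1 - 0|) ^ 2 := by rw [e2]
      _ = r ^ 2 := by norm_num
  have hs : f 1 - f 0 ≠ 0 := by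
    intro hc
    rw [hc] at q2
    nlinarith
  have key : (f 1 - f 0) * (f x - f 0 - (f 1 - f 0) * x) = 0 := by
    linear_combination q0 / 2 - q1 / 2 - (x - 1 / 2) * q2
  rcases mul_eq_zero.1 key with hc | hc
  · exact absurd hc hs
  · linarith

lemma affine_image_uIcc (c s a b : ℝ) :
    (fun x => c + s * x) '' uIcc a b = uIcc (c + s * a) (c + s * b) := by
  have hcomp : (fun x => c + s * x) = (fun y => c + y) ∘ (fun x : ℝ => s * x) := rfl
  rw [hcomp, Set.image_comp, Set.image_const_mul_uIcc, Set.image_const_add_uIcc]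

section LZ

variable {m : ℕ} {T : ℕ → ℝ → ℝ} {rT t : ℕ → ℝ} {ε : ℕ → ℕ}

lemma LZ_dist (h : IsLinearZipper m T rT t ε) {i : ℕ} (hi : i < m) :
    ∀ x y, dist (T i x) (T i y) = rT i * dist x y :=
  (h.1.2.1 i hi).2.2

lemma LZ_rT_pos (h : IsLinearZipper m T rT t ε) {i : ℕ} (hi : i < m) : 0 < rT i :=
  (h.1.2.1 i hi).1

lemma LZ_rT_lt_one (h : IsLinearZipper m T rT t ε) {i : ℕ} (hi : i < m) : rT i < 1 :=
  (h.1.2.1 i hi).2.1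

lemma LZ_tmono (h : IsLinearZipper m T rT t ε) {a b : ℕ} (hab : a ≤ b) (hbm : b ≤ m) :
    t a ≤ t b := by
  induction b, hab using Nat.le_induction with
  | base => exact le_rfl
  | succ b hb ih =>
    exact le_trans (ih (by omega)) (le_of_lt (h.2.2.2 b (by omega)))

lemma LZ_t_mem (h : IsLinearZipper m T rT t ε) {i : ℕ} (hi : i ≤ m) : t i ∈ Icc (0:ℝ) 1 := by
  constructor
  · rw [← h.2.1]; exact LZ_tmono h (Nat.zero_le _) hi
  · rw [← h.2.2.1]; exact LZ_tmono h hi le_rfl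

lemma LZ_Timg (h : IsLinearZipper m T rT t ε) {i : ℕ} (hi : i < m) :
    T i '' Icc 0 1 = Icc (t i) (t (i + 1)) := by
  have haff : T i = fun x => T i 0 + (T i 1 - T i 0) * x :=
    funext (affine_of_dist (LZ_rT_pos h hi) (LZ_dist h hi))
  have h01 : Icc (0:ℝ) 1 = uIcc 0 1 := by rw [uIcc_of_le]; norm_num
  rw [h01]
  conv_lhs => rw [haff]
  rw [affine_image_uIcc]
  have hT0 : T i 0 = t (i + ε i) := by rw [← h.2.1]; exact (h.1.2.2.2 i hi).1
  have hT1 : T i 1 = t (i + 1 - ε i) := by rw [← h.2.2.1]; exact (h.1.2.2.2 i hi).2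
  have hε := h.1.2.2.1 i hi
  have hlt := h.2.2.2 i hi
  interval_cases hε : ε i
  · rw [show T i 0 + (T i 1 - T i 0) * 0 = T i 0 by ring,
      show T i 0 + (T i 1 - T i 0) * 1 = T i 1 by ring, hT0, hT1]
    simp only [Nat.add_zero, Nat.add_sub_cancel]
    exact uIcc_of_le hlt.le
  · rw [show T i 0 + (T i 1 - T i 0) * 0 = T i 0 by ring,
      show T i 0 + (T i 1 - T i 0) * 1 = T i 1 by ring, hT0, hT1]
    simp only [Nat.add_sub_cancel]
    rw [uIcc_comm]
    exact uIcc_of_le hlt.le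

lemma LZ_compS_dist (h : IsLinearZipper m T rT t ε) {l : List ℕ} (hl : ∀ j ∈ l, j < m) :
    ∀ x y, dist (compS T l x) (compS T l y) = ratioProd rT l * dist x y :=
  compS_dist fun i hi => LZ_dist h (hl i hi)

lemma LZ_R_pos (h : IsLinearZipper m T rT t ε) {l : List ℕ} (hl : ∀ j ∈ l, j < m) :
    0 < ratioProd rT l :=
  ratioProd_pos fun i hi => LZ_rT_pos h (hl i hi)

lemma LZ_J_eq (h : IsLinearZipper m T rT t ε) {l : List ℕ} (hl : ∀ j ∈ l, j < m) :
    compS T l '' Icc 0 1 = uIcc (compS T l 0) (compS T l 1) := by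
  have haff : compS T l = fun x => compS T l 0 + (compS T l 1 - compS T l 0) * x :=
    funext (affine_of_dist (LZ_R_pos h hl) (LZ_compS_dist h hl))
  have h01 : Icc (0:ℝ) 1 = uIcc 0 1 := by rw [uIcc_of_le]; norm_num
  rw [h01]
  conv_lhs => rw [haff]
  rw [affine_image_uIcc]
  norm_num

lemma LZ_len (h : IsLinearZipper m T rT t ε) {l : List ℕ} (hl : ∀ j ∈ l, j < m) :
    max (compS T l 0) (compS T l 1) - min (compS T l 0) (compS T l 1) = ratioProd rT l := by
  rw [max_sub_min_eq_abs, ← Real.dist_eq, LZ_compS_dist h hl]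
  simp [Real.dist_eq]

lemma LZ_J_subset_unit (h : IsLinearZipper m T rT t ε) {l : List ℕ} (hl : ∀ j ∈ l, j < m) :
    compS T l '' Icc 0 1 ⊆ Icc 0 1 := by
  induction l with
  | nil => simp [compS]
  | cons i l ih =>
    have hi : i < m := hl i (by simp)
    calc compS T (i :: l) '' Icc 0 1 = T i '' (compS T l '' Icc 0 1) := by
          rw [show compS T (i :: l) = T i ∘ compS T l from rfl, image_comp]
      _ ⊆ T i '' Icc 0 1 := image_mono (f := _) (ih fun j hj => hl j (by simp [hj]))
      _ = Icc (t i) (t (i + 1)) := LZ_Timg h hi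
      _ ⊆ Icc 0 1 := Icc_subset_Icc (LZ_t_mem h hi.le).1 (LZ_t_mem h hi).2

lemma LZ_child_subset (h : IsLinearZipper m T rT t ε) {l : List ℕ} (hl : ∀ j ∈ l, j < m)
    {i : ℕ} (hi : i < m) :
    compS T (l ++ [i]) '' Icc 0 1 ⊆ compS T l '' Icc 0 1 := by
  rw [compS_append, image_comp]
  refine image_mono (f := _) ?_
  rw [show compS T [i] = T i from rfl, LZ_Timg h hi]
  exact Icc_subset_Icc (LZ_t_mem h hi.le).1 (LZ_t_mem h hi).2

lemma LZ_unit_cover (h : IsLinearZipper m T rT t ε) :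
    Icc (0:ℝ) 1 ⊆ ⋃ i ∈ Finset.range m, Icc (t i) (t (i + 1)) := by
  have key : ∀ k, 1 ≤ k → k ≤ m →
      Icc (t 0) (t k) ⊆ ⋃ i ∈ Finset.range k, Icc (t i) (t (i + 1)) := by
    intro k hk1
    induction k, hk1 using Nat.le_induction with
    | base =>
      intro _ x hx
      simp only [Finset.mem_range, mem_iUnion]
      exact ⟨0, by omega, hx⟩
    | succ k hk ih =>
      intro hkm
      have hsplit : Icc (t 0) (t k) ∪ Icc (t k) (t (k + 1)) = Icc (t 0) (t (k + 1)) :=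
        Icc_union_Icc_eq_Icc (LZ_tmono h (Nat.zero_le _) (by omega))
          (le_of_lt (h.2.2.2 k (by omega)))
      rw [← hsplit]
      intro x hx
      rcases hx with hx | hx
      · rcases mem_iUnion₂.1 (ih (by omega) hx) with ⟨i, hi, hxi⟩
        exact mem_iUnion₂.2 ⟨i, by simp at hi ⊢; omega, hxi⟩
      · exact mem_iUnion₂.2 ⟨k, by simp, hx⟩
  have h0 : t 0 = 0 := h.2.1
  have h1 : t m = 1 := h.2.2.1
  rw [← h0, ← h1]
  exact key m h.1.1 le_rfl

lemma LZ_children_cover (h : IsLinearZipper m T rT t ε) {l : List ℕ} (hl : ∀ j ∈ l, j < m) :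
    compS T l '' Icc 0 1 ⊆ ⋃ i ∈ Finset.range m, compS T (l ++ [i]) '' Icc 0 1 := by
  intro y hy
  rcases hy with ⟨x, hx, rfl⟩
  rcases mem_iUnion₂.1 (LZ_unit_cover h hx) with ⟨i, hi, hxi⟩
  simp only [Finset.mem_range] at hi
  refine mem_iUnion₂.2 ⟨i, by simpa using hi, ?_⟩
  rw [compS_append, image_comp, show compS T [i] = T i from rfl, LZ_Timg h hi]
  exact ⟨x, hxi, rfl⟩


lemma uIcc_eq_Icc' (a b : ℝ) : uIcc a b = Icc (min a b) (max a b) := rfl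

lemma LZ_sub_len (h : IsLinearZipper m T rT t ε) {l : List ℕ} (hl : ∀ j ∈ l, j < m)
    {u v : ℝ} (huv : u ≤ v) (hsub : Icc u v ⊆ compS T l '' Icc 0 1) :
    v - u ≤ ratioProd rT l := by
  have hu := hsub (left_mem_Icc.2 huv)
  have hv := hsub (right_mem_Icc.2 huv)
  rw [LZ_J_eq h hl, uIcc_eq_Icc', mem_Icc] at hu hv
  rw [← LZ_len h hl]
  linarith [hu.1, hv.2]

lemma LZ_greedy (h : IsLinearZipper m T rT t ε) {u v : ℝ} (huv : u < v)
    {l₀ : List ℕ} (hl₀ : ∀ j ∈ l₀, j < m) (hsub : Icc u v ⊆ compS T l₀ '' Icc 0 1) :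
    ∃ l, (∀ j ∈ l, j < m) ∧ Icc u v ⊆ compS T l '' Icc 0 1 ∧
      compS T l '' Icc 0 1 ⊆ compS T l₀ '' Icc 0 1 ∧
      ∀ i < m, ¬ Icc u v ⊆ compS T (l ++ [i]) '' Icc 0 1 := by
  have hm : 0 < m := h.1.1
  have hMne : (Finset.range m).Nonempty := Finset.nonempty_range_iff.2 hm.ne'
  set rmax : ℝ := (Finset.range m).sup' hMne rT with hrmax
  have hle : ∀ i < m, rT i ≤ rmax := fun i hi =>
    Finset.le_sup' rT (Finset.mem_range.2 hi)
  have hrmax1 : rmax < 1 := by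
    rw [hrmax, Finset.sup'_lt_iff]
    intro i hi
    exact LZ_rT_lt_one h (Finset.mem_range.1 hi)
  have hrmax0 : 0 < rmax := lt_of_lt_of_le (LZ_rT_pos h hm) (hle 0 hm)
  have hinv1 : 1 < rmax⁻¹ := (one_lt_inv₀ hrmax0).2 hrmax1
  have main : ∀ N : ℕ, ∀ l : List ℕ, (∀ j ∈ l, j < m) →
      Icc u v ⊆ compS T l '' Icc 0 1 →
      ratioProd rT l ≤ (v - u) * rmax⁻¹ ^ N →
      ∃ l', (∀ j ∈ l', j < m) ∧ Icc u v ⊆ compS T l' '' Icc 0 1 ∧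
        compS T l' '' Icc 0 1 ⊆ compS T l '' Icc 0 1 ∧
        ∀ i < m, ¬ Icc u v ⊆ compS T (l' ++ [i]) '' Icc 0 1 := by
    intro N
    induction N with
    | zero =>
      intro l hl hsubl hR
      refine ⟨l, hl, hsubl, subset_rfl, ?_⟩
      intro i hi hcon
      have hli : ∀ j ∈ l ++ [i], j < m := by
        intro j hj
        rcases List.mem_append.1 hj with hj | hj
        · exact hl j hj
        · simp at hj; omega
      have h1 : v - u ≤ ratioProd rT (l ++ [i]) := LZ_sub_len h hli huv.le hcon
      rw [ratioProd_append, ratioProd_singleton] at h1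
      rw [pow_zero, mul_one] at hR
      nlinarith [LZ_R_pos h hl, LZ_rT_pos h hi, LZ_rT_lt_one h hi]
    | succ N ih =>
      intro l hl hsubl hR
      by_cases hc : ∀ i < m, ¬ Icc u v ⊆ compS T (l ++ [i]) '' Icc 0 1
      · exact ⟨l, hl, hsubl, subset_rfl, hc⟩
      · push_neg at hc
        obtain ⟨i, hi, hsubi⟩ := hc
        have hli : ∀ j ∈ l ++ [i], j < m := by
          intro j hj
          rcases List.mem_append.1 hj with hj | hj
          · exact hl j hj
          · simp at hj; omega
        have hR' : ratioProd rT (l ++ [i]) ≤ (v - u) * rmax⁻¹ ^ N := by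
          rw [ratioProd_append, ratioProd_singleton]
          have step : ratioProd rT l * rT i ≤ ((v - u) * rmax⁻¹ ^ (N + 1)) * rmax :=
            mul_le_mul hR (hle i hi) (LZ_rT_pos h hi).le
              (mul_nonneg (by linarith) (by positivity))
          calc ratioProd rT l * rT i ≤ ((v - u) * rmax⁻¹ ^ (N + 1)) * rmax := step
            _ = (v - u) * rmax⁻¹ ^ N * (rmax⁻¹ * rmax) := by ring
            _ = (v - u) * rmax⁻¹ ^ N := by
                rw [inv_mul_cancel₀ hrmax0.ne', mul_one]
        obtain ⟨l', h1, h2, h3, h4⟩ := ih (l ++ [i]) hli hsubi hR'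
        exact ⟨l', h1, h2, h3.trans (LZ_child_subset h hl hi), h4⟩
  obtain ⟨N, hN⟩ := pow_unbounded_of_one_lt (ratioProd rT l₀ / (v - u)) hinv1
  refine main N l₀ hl₀ hsub ?_
  rw [div_lt_iff₀ (by linarith : (0:ℝ) < v - u)] at hN
  linarith [hN]

lemma interval_pair (m : ℕ) (A B : ℕ → ℝ) (u v : ℝ) (huv : u < v)
    (hcov : Icc u v ⊆ ⋃ i ∈ Finset.range m, Icc (A i) (B i))
    (hnc : ∀ i < m, ¬ Icc u v ⊆ Icc (A i) (B i)) :
    (∃ i < m, Icc (A i) (B i) ⊆ Icc u v) ∨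
    (∃ i j, i < m ∧ j < m ∧ A i ≤ u ∧ u < B i ∧ B i < v ∧ u < A j ∧ A j ≤ B i ∧ v ≤ B j) := by
  have hmem : ∀ s ∈ Icc u v, ∃ k, k < m ∧ A k ≤ s ∧ s ≤ B k := by
    intro s hs
    rcases mem_iUnion₂.1 (hcov hs) with ⟨k, hk, hks⟩
    rw [mem_Icc] at hks
    exact ⟨k, Finset.mem_range.1 hk, hks.1, hks.2⟩
  have hncE : ∀ i < m, A i ≤ u → ¬ v ≤ B i := by
    intro i hi hA hB
    exact hnc i hi (Icc_subset_Icc hA hB)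
  -- U nonempty
  have hUex : ∃ i, i < m ∧ A i ≤ u ∧ u < B i := by
    by_contra hcon
    push_neg at hcon
    set Z : Finset ℕ := (Finset.range m).filter (fun i => u < A i) with hZ
    by_cases hZne : Z.Nonempty
    · set β : ℝ := min v (Z.inf' hZne A) with hβ
      have hβu : u < β := by
        rw [hβ]
        apply lt_min huv
        rw [Finset.lt_inf'_iff]
        intro i hi
        exact (Finset.mem_filter.1 hi).2
      set s : ℝ := (u + β) / 2 with hs
      have hsu : u < s := by rw [hs]; linarith
      have hsβ : s < β := by rw [hs]; linarith
      have hsv : s ≤ v := le_of_lt (lt_of_lt_of_le hsβ (min_le_left _ _))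
      obtain ⟨k, hk, hAk, hBk⟩ := hmem s ⟨hsu.le, hsv⟩
      by_cases hAku : A k ≤ u
      · have := hcon k hk hAku
        linarith
      · push_neg at hAku
        have hkZ : k ∈ Z := Finset.mem_filter.2 ⟨Finset.mem_range.2 hk, hAku⟩
        have : β ≤ A k := le_trans (min_le_right _ _) (Finset.inf'_le A hkZ)
        linarith
    · -- Z empty : all A i ≤ u
      set s : ℝ := (u + v) / 2 with hs
      obtain ⟨k, hk, hAk, hBk⟩ := hmem s ⟨by rw [hs]; linarith, by rw [hs]; linarith⟩
      have hAku : A k ≤ u := by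
        by_contra hcon2
        push_neg at hcon2
        exact hZne ⟨k, Finset.mem_filter.2 ⟨Finset.mem_range.2 hk, hcon2⟩⟩
      have : B k ≤ u := hcon k hk hAku
      rw [hs] at hBk
      linarith
  -- V nonempty
  have hVex : ∃ j, j < m ∧ A j < v ∧ v ≤ B j := by
    by_contra hcon
    push_neg at hcon
    set Z : Finset ℕ := (Finset.range m).filter (fun i => B i < v) with hZ
    by_cases hZne : Z.Nonempty
    · set β : ℝ := max u (Z.sup' hZne B) with hβ
      have hβv : β < v := by
        rw [hβ]
        apply max_lt huv
        rw [Finset.sup'_lt_iff]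
        intro i hi
        exact (Finset.mem_filter.1 hi).2
      set s : ℝ := (β + v) / 2 with hs
      have hsv : s < v := by rw [hs]; linarith
      have hsβ : β < s := by rw [hs]; linarith
      have hsu : u ≤ s := le_of_lt (lt_of_le_of_lt (le_max_left _ _) hsβ)
      obtain ⟨k, hk, hAk, hBk⟩ := hmem s ⟨hsu, hsv.le⟩
      by_cases hBkv : v ≤ B k
      · have := hcon k hk (by linarith : A k < v)
        linarith
      · push_neg at hBkv
        have hkZ : k ∈ Z := Finset.mem_filter.2 ⟨Finset.mem_range.2 hk, hBkv⟩
        have : B k ≤ β := le_trans (Finset.le_sup' B hkZ) (le_max_right _ _)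
        linarith
    · set s : ℝ := (u + v) / 2 with hs
      obtain ⟨k, hk, hAk, hBk⟩ := hmem s ⟨by rw [hs]; linarith, by rw [hs]; linarith⟩
      have hBkv : v ≤ B k := by
        by_contra hcon2
        push_neg at hcon2
        exact hZne ⟨k, Finset.mem_filter.2 ⟨Finset.mem_range.2 hk, hcon2⟩⟩
      rw [hs] at hAk
      have := hcon k hk (by linarith)
      linarith
  -- pick maximizing / minimizing elements
  obtain ⟨i₀, hi₀, hAi₀, hBi₀⟩ := hUex
  obtain ⟨j₀, hj₀, hAj₀, hBj₀⟩ := hVex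
  set U : Finset ℕ := (Finset.range m).filter (fun i => A i ≤ u ∧ u < B i) with hU
  have hUne : U.Nonempty := ⟨i₀, Finset.mem_filter.2 ⟨Finset.mem_range.2 hi₀, hAi₀, hBi₀⟩⟩
  obtain ⟨iS, hiSU, hiSmax⟩ := U.exists_max_image B hUne
  have hiSm : iS < m := Finset.mem_range.1 (Finset.mem_filter.1 hiSU).1
  have hiSA : A iS ≤ u := (Finset.mem_filter.1 hiSU).2.1
  have hiSB : u < B iS := (Finset.mem_filter.1 hiSU).2.2
  have hiSBv : B iS < v := not_le.1 (hncE iS hiSm hiSA)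
  set V : Finset ℕ := (Finset.range m).filter (fun i => A i < v ∧ v ≤ B i) with hV
  have hVne : V.Nonempty := ⟨j₀, Finset.mem_filter.2 ⟨Finset.mem_range.2 hj₀, hAj₀, hBj₀⟩⟩
  obtain ⟨jS, hjSV, hjSmin⟩ := V.exists_min_image A hVne
  have hjSm : jS < m := Finset.mem_range.1 (Finset.mem_filter.1 hjSV).1
  have hjSA : A jS < v := (Finset.mem_filter.1 hjSV).2.1
  have hjSB : v ≤ B jS := (Finset.mem_filter.1 hjSV).2.2
  have hjSAu : u < A jS := by
    by_contra hcon2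
    push_neg at hcon2
    exact hncE jS hjSm hcon2 hjSB
  by_cases hττ : A jS ≤ B iS
  · exact Or.inr ⟨iS, jS, hiSm, hjSm, hiSA, hiSB, hiSBv, hjSAu, hττ, hjSB⟩
  · push_neg at hττ
    set s : ℝ := (B iS + A jS) / 2 with hs
    have hs1 : B iS < s := by rw [hs]; linarith
    have hs2 : s < A jS := by rw [hs]; linarith
    obtain ⟨k, hk, hAk, hBk⟩ := hmem s ⟨by linarith, by linarith⟩
    have hAku : u < A k := by
      by_contra hcon2
      push_neg at hcon2
      have hkU : k ∈ U := Finset.mem_filter.2 ⟨Finset.mem_range.2 hk, hcon2, by linarith⟩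
      have := hiSmax k hkU
      linarith
    have hBkv : B k < v := by
      by_contra hcon2
      push_neg at hcon2
      have hkV : k ∈ V := Finset.mem_filter.2 ⟨Finset.mem_range.2 hk, by linarith, hcon2⟩
      have := hjSmin k hkV
      linarith
    exact Or.inl ⟨k, hk, Icc_subset_Icc hAku.le hBkv.le⟩

lemma mem_append_lt {m : ℕ} {l : List ℕ} (hl : ∀ j ∈ l, j < m) {i : ℕ} (hi : i < m) :
    ∀ j ∈ l ++ [i], j < m := by
  intro j hj
  rcases List.mem_append.1 hj with hj | hj
  · exact hl j hj
  · simp at hj; omega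

lemma LZ_child_at_top (h : IsLinearZipper m T rT t ε) {l : List ℕ} (hl : ∀ j ∈ l, j < m)
    {u b : ℝ} (hub : u < b) (hsub : Icc u b ⊆ compS T l '' Icc 0 1)
    (htop : ∀ x ∈ compS T l '' Icc 0 1, x ≤ b)
    (hnc : ∀ i < m, ¬ Icc u b ⊆ compS T (l ++ [i]) '' Icc 0 1) :
    ∃ c, c < m ∧ compS T (l ++ [c]) '' Icc 0 1 ⊆ Icc u b ∧
      b ∈ compS T (l ++ [c]) '' Icc 0 1 := by
  have hbJ : b ∈ compS T l '' Icc 0 1 := hsub (right_mem_Icc.2 hub.le)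
  rcases mem_iUnion₂.1 (LZ_children_cover h hl hbJ) with ⟨c, hc, hbc⟩
  simp only [Finset.mem_range] at hc
  have hlc := mem_append_lt hl hc
  have hJc : compS T (l ++ [c]) '' Icc 0 1 =
      Icc (min (compS T (l ++ [c]) 0) (compS T (l ++ [c]) 1))
        (max (compS T (l ++ [c]) 0) (compS T (l ++ [c]) 1)) := by
    rw [LZ_J_eq h hlc, uIcc_eq_Icc']
  set Ac := min (compS T (l ++ [c]) 0) (compS T (l ++ [c]) 1)
  set Bc := max (compS T (l ++ [c]) 0) (compS T (l ++ [c]) 1)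
  have hmemb : Ac ≤ b ∧ b ≤ Bc := by rw [hJc, mem_Icc] at hbc; exact hbc
  have hBc : Bc = b := by
    have h1 : Bc ∈ compS T (l ++ [c]) '' Icc 0 1 := by
      rw [hJc]; exact ⟨min_le_max, le_rfl⟩
    exact le_antisymm (htop Bc (LZ_child_subset h hl hc h1)) hmemb.2
  have hAc : u < Ac := by
    by_contra hcon
    push_neg at hcon
    exact hnc c hc (by rw [hJc]; exact Icc_subset_Icc hcon hmemb.2)
  exact ⟨c, hc, by rw [hJc]; exact Icc_subset_Icc hAc.le hBc.le, hbc⟩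

lemma LZ_child_at_bot (h : IsLinearZipper m T rT t ε) {l : List ℕ} (hl : ∀ j ∈ l, j < m)
    {a v : ℝ} (hav : a < v) (hsub : Icc a v ⊆ compS T l '' Icc 0 1)
    (hbot : ∀ x ∈ compS T l '' Icc 0 1, a ≤ x)
    (hnc : ∀ i < m, ¬ Icc a v ⊆ compS T (l ++ [i]) '' Icc 0 1) :
    ∃ c, c < m ∧ compS T (l ++ [c]) '' Icc 0 1 ⊆ Icc a v ∧
      a ∈ compS T (l ++ [c]) '' Icc 0 1 := by
  have haJ : a ∈ compS T l '' Icc 0 1 := hsub (left_mem_Icc.2 hav.le)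
  rcases mem_iUnion₂.1 (LZ_children_cover h hl haJ) with ⟨c, hc, hac⟩
  simp only [Finset.mem_range] at hc
  have hlc := mem_append_lt hl hc
  have hJc : compS T (l ++ [c]) '' Icc 0 1 =
      Icc (min (compS T (l ++ [c]) 0) (compS T (l ++ [c]) 1))
        (max (compS T (l ++ [c]) 0) (compS T (l ++ [c]) 1)) := by
    rw [LZ_J_eq h hlc, uIcc_eq_Icc']
  set Ac := min (compS T (l ++ [c]) 0) (compS T (l ++ [c]) 1)
  set Bc := max (compS T (l ++ [c]) 0) (compS T (l ++ [c]) 1)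
  have hmema : Ac ≤ a ∧ a ≤ Bc := by rw [hJc, mem_Icc] at hac; exact hac
  have hAc : Ac = a := by
    have h1 : Ac ∈ compS T (l ++ [c]) '' Icc 0 1 := by
      rw [hJc]; exact ⟨le_rfl, min_le_max⟩
    exact le_antisymm hmema.1 (hbot Ac (LZ_child_subset h hl hc h1))
  have hBc : Bc < v := by
    by_contra hcon
    push_neg at hcon
    exact hnc c hc (by rw [hJc]; exact Icc_subset_Icc hmema.1 hcon)
  exact ⟨c, hc, by rw [hJc]; exact Icc_subset_Icc hAc.ge hBc.le, hac⟩

lemma LZ_key_pair (h : IsLinearZipper m T rT t ε) {u v : ℝ}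
    (hu : 0 ≤ u) (huv : u < v) (hv : v ≤ 1) :
    ∃ l₁ l₂ : List ℕ, ∃ c₁ c₂ : ℕ,
      (∀ j ∈ l₁, j < m) ∧ (∀ j ∈ l₂, j < m) ∧ c₁ < m ∧ c₂ < m ∧
      (∃ w₀, w₀ ∈ Icc u v ∧ w₀ ∈ compS T l₁ '' Icc 0 1 ∧ w₀ ∈ compS T l₂ '' Icc 0 1) ∧
      Icc u v ⊆ (compS T l₁ '' Icc 0 1) ∪ (compS T l₂ '' Icc 0 1) ∧
      compS T (l₁ ++ [c₁]) '' Icc 0 1 ⊆ Icc u v ∧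
      compS T (l₂ ++ [c₂]) '' Icc 0 1 ⊆ Icc u v := by
  have hnil : ∀ j ∈ ([] : List ℕ), j < m := by simp
  have hsub0 : Icc u v ⊆ compS T [] '' Icc 0 1 := by
    simp only [compS, image_id]
    exact Icc_subset_Icc hu hv
  obtain ⟨w, hwl, hwsub, -, hwnc⟩ := LZ_greedy h huv hnil hsub0
  -- children of w as intervals
  set A : ℕ → ℝ := fun i => min (compS T (w ++ [i]) 0) (compS T (w ++ [i]) 1) with hA
  set B : ℕ → ℝ := fun i => max (compS T (w ++ [i]) 0) (compS T (w ++ [i]) 1) with hB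
  have hJi : ∀ i, i < m → compS T (w ++ [i]) '' Icc 0 1 = Icc (A i) (B i) := by
    intro i hi
    rw [LZ_J_eq h (mem_append_lt hwl hi), uIcc_eq_Icc']
  have hcov : Icc u v ⊆ ⋃ i ∈ Finset.range m, Icc (A i) (B i) := by
    intro x hx
    rcases mem_iUnion₂.1 (LZ_children_cover h hwl (hwsub hx)) with ⟨i, hi, hxi⟩
    simp only [Finset.mem_range] at hi
    refine mem_iUnion₂.2 ⟨i, by simpa using hi, ?_⟩
    rwa [hJi i hi] at hxi
  have hnc : ∀ i < m, ¬ Icc u v ⊆ Icc (A i) (B i) := by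
    intro i hi hcon
    exact hwnc i hi (by rw [hJi i hi]; exact hcon)
  rcases interval_pair m A B u v huv hcov hnc with ⟨i, hi, hsubI⟩ | hcase
  · -- a full child of w inside [u,v]
    refine ⟨w, w, i, i, hwl, hwl, hi, hi, ⟨u, left_mem_Icc.2 huv.le,
      hwsub (left_mem_Icc.2 huv.le), hwsub (left_mem_Icc.2 huv.le)⟩, ?_, ?_, ?_⟩
    · exact fun x hx => Or.inl (hwsub hx)
    · rw [hJi i hi]; exact hsubI
    · rw [hJi i hi]; exact hsubI
  · obtain ⟨i, j, hi, hj, hAiu, huBi, hBiv, huAj, hAjBi, hvBj⟩ := hcase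
    -- left part [u, B i] inside child i of w
    have hsubL : Icc u (B i) ⊆ compS T (w ++ [i]) '' Icc 0 1 := by
      rw [hJi i hi]; exact Icc_subset_Icc hAiu le_rfl
    obtain ⟨l₁, hl₁, hsub₁, hsubJ₁, hnc₁⟩ := LZ_greedy h huBi (mem_append_lt hwl hi) hsubL
    have htop₁ : ∀ x ∈ compS T l₁ '' Icc 0 1, x ≤ B i := by
      intro x hx
      have := hsubJ₁ hx
      rw [hJi i hi, mem_Icc] at this
      exact this.2
    obtain ⟨c₁, hc₁, hchild₁, -⟩ := LZ_child_at_top h hl₁ huBi hsub₁ htop₁ hnc₁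
    -- right part [A j, v] inside child j of w
    have hsubR : Icc (A j) v ⊆ compS T (w ++ [j]) '' Icc 0 1 := by
      rw [hJi j hj]; exact Icc_subset_Icc le_rfl hvBj
    have hAjv : A j < v := lt_of_le_of_lt hAjBi hBiv
    obtain ⟨l₂, hl₂, hsub₂, hsubJ₂, hnc₂⟩ := LZ_greedy h hAjv (mem_append_lt hwl hj) hsubR
    have hbot₂ : ∀ x ∈ compS T l₂ '' Icc 0 1, A j ≤ x := by
      intro x hx
      have := hsubJ₂ hx
      rw [hJi j hj, mem_Icc] at this
      exact this.1
    obtain ⟨c₂, hc₂, hchild₂, -⟩ := LZ_child_at_bot h hl₂ hAjv hsub₂ hbot₂ hnc₂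
    refine ⟨l₁, l₂, c₁, c₂, hl₁, hl₂, hc₁, hc₂, ?_, ?_, ?_, ?_⟩
    · refine ⟨A j, ⟨huAj.le, hAjv.le⟩, ?_, ?_⟩
      · exact hsub₁ ⟨huAj.le, hAjBi⟩
      · exact hsub₂ (left_mem_Icc.2 hAjv.le)
    · intro x hx
      rw [mem_Icc] at hx
      by_cases hxB : x ≤ B i
      · exact Or.inl (hsub₁ ⟨hx.1, hxB⟩)
      · push_neg at hxB
        exact Or.inr (hsub₂ ⟨le_trans hAjBi hxB.le, hx.2⟩)
    · exact hchild₁.trans (Icc_subset_Icc le_rfl hBiv.le)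
    · exact hchild₂.trans (Icc_subset_Icc huAj.le le_rfl)


end LZ

set_option maxHeartbeats 1000000 in
/-- with `α = min_i min(log p_i / log q_i, log q_i / log p_i)` one has
`α ≤ 1`, and `α = 1` iff `p_i = q_i` for all `i`; consequently the agreeing
homeomorphism is bi-Lipschitz iff `p_i = q_i` for all `i`. -/
theorem biLipschitz_iff_equal_ratios {n : ℕ} (m : ℕ)
    (S S' : ℕ → EuclideanSpace ℝ (Fin n) → EuclideanSpace ℝ (Fin n)) (p q : ℕ → ℝ)
    (z z' : ℕ → EuclideanSpace ℝ (Fin n)) (ε : ℕ → ℕ)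
    (γ γ' : Set (EuclideanSpace ℝ (Fin n)))
    (hS : IsJordanZipper m S p z ε γ) (hS' : IsJordanZipper m S' q z' ε γ')
    (M M' : ℝ) (hγ : BoundedTurning γ M) (hγ' : BoundedTurning γ' M')
    (f : EuclideanSpace ℝ (Fin n) → EuclideanSpace ℝ (Fin n))
    (hf : IsHomeoOnto γ γ' f) (hfa : Agrees m S S' γ f)
    (hm : 0 < m) (α : ℝ)
    (hα : α = (Finset.range m).inf' (Finset.nonempty_range_iff.mpr hm.ne')
      (fun i => min (Real.log (p i) / Real.log (q i)) (Real.log (q i) / Real.log (p i)))) :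
    α ≤ 1 ∧ (α = 1 ↔ ∀ i < m, p i = q i) ∧
      ((∃ C ≥ (1:ℝ), ∀ x ∈ γ, ∀ y ∈ γ,
          C⁻¹ * dist x y ≤ dist (f x) (f y) ∧ dist (f x) (f y) ≤ C * dist x y)
        ↔ ∀ i < m, p i = q i) := by
  obtain ⟨hZ, hAttr, T, rT, t, g, hLZ, hSP, hginj, hgimg⟩ := hS
  obtain ⟨hZ', hAttr', T', rT', t', g', hLZ', hSP', hginj', hgimg'⟩ := hS'
  have hp : ∀ i < m, 0 < p i ∧ p i < 1 := fun i hi => ⟨(hZ.2.1 i hi).1, (hZ.2.1 i hi).2.1⟩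
  have hq : ∀ i < m, 0 < q i ∧ q i < 1 := fun i hi => ⟨(hZ'.2.1 i hi).1, (hZ'.2.1 i hi).2.1⟩
  have hSdist : ∀ i < m, ∀ x y, dist (S i x) (S i y) = p i * dist x y :=
    fun i hi => (hZ.2.1 i hi).2.2
  have hS'dist : ∀ i < m, ∀ x y, dist (S' i x) (S' i y) = q i * dist x y :=
    fun i hi => (hZ'.2.1 i hi).2.2
  have hlogp : ∀ i < m, Real.log (p i) < 0 := fun i hi =>
    Real.log_neg (hp i hi).1 (hp i hi).2
  have hlogq : ∀ i < m, Real.log (q i) < 0 := fun i hi =>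
    Real.log_neg (hq i hi).1 (hq i hi).2
  have hterm : ∀ i < m,
      min (Real.log (p i) / Real.log (q i)) (Real.log (q i) / Real.log (p i)) ≤ 1 := by
    intro i hi
    have ha := hlogp i hi
    have hb := hlogq i hi
    rcases le_total (Real.log (p i)) (Real.log (q i)) with hab | hab
    · refine le_trans (min_le_right _ _) ?_
      rw [div_le_one_iff]
      exact Or.inr (Or.inr ⟨ha, hab⟩)
    · refine le_trans (min_le_left _ _) ?_
      rw [div_le_one_iff]
      exact Or.inr (Or.inr ⟨hb, hab⟩)
  have hαle1 : α ≤ 1 := by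
    rw [hα]
    exact le_trans (Finset.inf'_le _ (Finset.mem_range.2 hm)) (hterm 0 hm)
  have hiff2 : α = 1 ↔ ∀ i < m, p i = q i := by
    constructor
    · intro hα1 i hi
      have hge : 1 ≤ min (Real.log (p i) / Real.log (q i))
          (Real.log (q i) / Real.log (p i)) := by
        rw [← hα1, hα]
        exact Finset.inf'_le _ (Finset.mem_range.2 hi)
      have ha := hlogp i hi
      have hb := hlogq i hi
      have h1 : 1 ≤ Real.log (p i) / Real.log (q i) := le_trans hge (min_le_left _ _)
      have h2 : 1 ≤ Real.log (q i) / Real.log (p i) := le_trans hge (min_le_right _ _)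
      have e1 : Real.log (p i) ≤ Real.log (q i) := by
        have := mul_le_mul_of_nonpos_left h1 hb.le
        rw [mul_one, mul_comm, div_mul_cancel₀ _ hb.ne] at this
        exact this
      have e2 : Real.log (q i) ≤ Real.log (p i) := by
        have := mul_le_mul_of_nonpos_left h2 ha.le
        rw [mul_one, mul_comm, div_mul_cancel₀ _ ha.ne] at this
        exact this
      exact Real.log_injOn_pos (mem_Ioi.2 (hp i hi).1) (mem_Ioi.2 (hq i hi).1)
        (le_antisymm e1 e2)
    · intro hpq
      refine le_antisymm hαle1 ?_
      rw [hα]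
      apply Finset.le_inf'
      intro i hi
      rw [Finset.mem_range] at hi
      rw [hpq i hi, div_self (hlogq i hi).ne, min_self]
  refine ⟨hαle1, hiff2, ?_⟩
  -- shared helpers for part 3
  have hγinv : ∀ i < m, ∀ x ∈ γ, S i x ∈ γ := by
    intro i hi x hx
    have heq := hAttr.2.2
    rw [heq]
    exact mem_iUnion₂.2 ⟨i, by simpa using hi, ⟨x, hx, rfl⟩⟩
  have hcmem : ∀ l : List ℕ, (∀ j ∈ l, j < m) → ∀ x ∈ γ, compS S l x ∈ γ := by
    intro l
    induction l with
    | nil => intro _ x hx; exact hx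
    | cons i l ih =>
      intro hl x hx
      exact hγinv i (hl i (by simp)) _ (ih (fun j hj => hl j (by simp [hj])) x hx)
  have hagree : ∀ l : List ℕ, (∀ j ∈ l, j < m) → ∀ x ∈ γ,
      f (compS S l x) = compS S' l (f x) := by
    intro l
    induction l with
    | nil => intro _ x _; rfl
    | cons i l ih =>
      intro hl x hx
      have h1 : compS S l x ∈ γ := hcmem l (fun j hj => hl j (by simp [hj])) x hx
      show f (S i (compS S l x)) = S' i (compS S' l (f x))
      rw [hfa i (hl i (by simp)) _ h1, ih (fun j hj => hl j (by simp [hj])) x hx]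
  have hg0 : g 0 ∈ γ := hgimg ▸ mem_image_of_mem g (by norm_num)
  have hg1 : g 1 ∈ γ := hgimg ▸ mem_image_of_mem g (by norm_num)
  have hgne : g 0 ≠ g 1 := by
    intro hc
    have := hginj (by norm_num : (0:ℝ) ∈ Icc (0:ℝ) 1) (by norm_num : (1:ℝ) ∈ Icc (0:ℝ) 1) hc
    norm_num at this
  have hd0 : 0 < dist (g 0) (g 1) := dist_pos.2 hgne
  have hd0' : 0 < dist (f (g 0)) (f (g 1)) :=
    dist_pos.2 fun hc => hgne (hf.2.1 hg0 hg1 hc)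
  constructor
  · -- bi-Lipschitz → equal ratios
    rintro ⟨C, hC1, hbil⟩ i hi
    have hC0 : 0 < C := lt_of_lt_of_le one_pos hC1
    have hkey : ∀ k : ℕ,
        q i ^ k * dist (f (g 0)) (f (g 1)) ≤ C * (p i ^ k * dist (g 0) (g 1)) ∧
        C⁻¹ * (p i ^ k * dist (g 0) (g 1)) ≤ q i ^ k * dist (f (g 0)) (f (g 1)) := by
      intro k
      set l := List.replicate k i with hldef
      have hlm : ∀ j ∈ l, j < m := by
        intro j hj
        rw [hldef, List.mem_replicate] at hj
        exact hj.2 ▸ hi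
      have hx' : compS S l (g 0) ∈ γ := hcmem l hlm _ hg0
      have hy' : compS S l (g 1) ∈ γ := hcmem l hlm _ hg1
      have hdS : dist (compS S l (g 0)) (compS S l (g 1)) = p i ^ k * dist (g 0) (g 1) := by
        rw [compS_dist (fun j hj x y => hSdist j (hlm j hj) x y), hldef, ratioProd_replicate]
      have hdS' : dist (f (compS S l (g 0))) (f (compS S l (g 1))) =
          q i ^ k * dist (f (g 0)) (f (g 1)) := by
        rw [hagree l hlm _ hg0, hagree l hlm _ hg1,
          compS_dist (fun j hj x y => hS'dist j (hlm j hj) x y), hldef, ratioProd_replicate]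
      have hb := hbil _ hx' _ hy'
      rw [hdS, hdS'] at hb
      exact ⟨hb.2, hb.1⟩
    by_contra hne2
    rcases lt_or_gt_of_ne hne2 with hlt | hlt
    · -- p i < q i
      have hr : 1 < q i / p i := (one_lt_div (hp i hi).1).2 hlt
      obtain ⟨k, hk⟩ := pow_unbounded_of_one_lt
        (C * dist (g 0) (g 1) / dist (f (g 0)) (f (g 1))) hr
      rw [div_pow, div_lt_div_iff₀ hd0' (pow_pos (hp i hi).1 k)] at hk
      have h1 := (hkey k).1
      nlinarith [hk, h1]
    · -- q i < p i
      have hr : 1 < p i / q i := (one_lt_div (hq i hi).1).2 hlt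
      obtain ⟨k, hk⟩ := pow_unbounded_of_one_lt
        (C * dist (f (g 0)) (f (g 1)) / dist (g 0) (g 1)) hr
      rw [div_pow, div_lt_div_iff₀ hd0 (pow_pos (hq i hi).1 k)] at hk
      have h2 := (hkey k).2
      -- C⁻¹ * (p^k d) ≤ q^k d'  ⇒  p^k d ≤ C * (q^k d')
      have h3 : p i ^ k * dist (g 0) (g 1) ≤ C * (q i ^ k * dist (f (g 0)) (f (g 1))) := by
        have := mul_le_mul_of_nonneg_left h2 hC0.le
        rw [← mul_assoc, mul_inv_cancel₀ hC0.ne', one_mul] at this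
        exact this
      nlinarith [hk, h3]
  · -- equal ratios → bi-Lipschitz
    intro hpq
    have hγbd : IsBounded γ := hAttr.2.1.isBounded
    have hγ'eq : γ' = f '' γ := hf.2.2.symm
    have hγ'bd : IsBounded γ' := by
      rw [hγ'eq]
      exact (hAttr.2.1.image_of_continuousOn hf.1).isBounded
    have hgmaps : MapsTo g (Icc 0 1) γ := by
      rw [← hgimg]; exact mapsTo_image g _
    have hgarc : IsArcParam γ g := ⟨hSP.1, hginj, hgimg⟩
    have hfg : IsArcParam γ' (f ∘ g) := by
      refine ⟨hf.1.comp hSP.1 hgmaps, hf.2.1.comp hginj hgmaps, ?_⟩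
      rw [image_comp, hgimg, hf.2.2]
    set D := diam γ with hDdef
    set D' := diam γ' with hD'def
    have hD : 0 < D := lt_of_lt_of_le hd0 (dist_le_diam_of_mem hγbd hg0 hg1)
    have hD' : 0 < D' := by
      refine lt_of_lt_of_le hd0' (dist_le_diam_of_mem hγ'bd ?_ ?_)
      · rw [hγ'eq]; exact mem_image_of_mem f hg0
      · rw [hγ'eq]; exact mem_image_of_mem f hg1
    have hMne : (Finset.range m).Nonempty := Finset.nonempty_range_iff.2 hm.ne'
    set pmin : ℝ := (Finset.range m).inf' hMne p with hpmindef
    have hpmin0 : 0 < pmin := by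
      rw [hpmindef, Finset.lt_inf'_iff]
      intro i hi
      exact (hp i (Finset.mem_range.1 hi)).1
    have hpminle : ∀ i < m, pmin ≤ p i := fun i hi =>
      Finset.inf'_le _ (Finset.mem_range.2 hi)
    -- cylinder diameters
    have hcylS : ∀ l : List ℕ, (∀ j ∈ l, j < m) →
        diam (compS S l '' γ) = ratioProd p l * D := by
      intro l hl
      exact diam_image_eq _ (ratioProd_pos fun i hi => (hp i (hl i hi)).1)
        (compS_dist fun i hi x y => hSdist i (hl i hi) x y) hγbd
    have hcylS' : ∀ l : List ℕ, (∀ j ∈ l, j < m) →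
        diam (compS S' l '' γ') = ratioProd p l * D' := by
      intro l hl
      rw [ratioProd_congr (fun i hi => hpq i (hl i hi))]
      exact diam_image_eq _ (ratioProd_pos fun i hi => (hq i (hl i hi)).1)
        (compS_dist fun i hi x y => hS'dist i (hl i hi) x y) hγ'bd
    -- structural relation iterated
    have hstr : ∀ l : List ℕ, (∀ j ∈ l, j < m) → ∀ x ∈ Icc (0:ℝ) 1,
        compS S l (g x) = g (compS T l x) := by
      intro l
      induction l with
      | nil => intro _ x _; rfl
      | cons i l ih =>
        intro hl x hx
        have hi : i < m := hl i (by simp)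
        have hl' : ∀ j ∈ l, j < m := fun j hj => hl j (by simp [hj])
        have hmem : compS T l x ∈ Icc (0:ℝ) 1 :=
          LZ_J_subset_unit hLZ hl' ⟨x, hx, rfl⟩
        show S i (compS S l (g x)) = g (T i (compS T l x))
        rw [ih hl' x hx, hSP.2.2 i hi _ hmem]
    have hgJ : ∀ l : List ℕ, (∀ j ∈ l, j < m) →
        g '' (compS T l '' Icc 0 1) = compS S l '' γ := by
      intro l hl
      calc g '' (compS T l '' Icc 0 1) = (g ∘ compS T l) '' Icc 0 1 :=
            (image_comp g _ _).symm
        _ = (compS S l ∘ g) '' Icc 0 1 :=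
            (image_congr fun x hx => (hstr l hl x hx)).symm
        _ = compS S l '' (g '' Icc 0 1) := image_comp _ g _
        _ = compS S l '' γ := by rw [hgimg]
    have hfcyl : ∀ l : List ℕ, (∀ j ∈ l, j < m) →
        f '' (compS S l '' γ) = compS S' l '' γ' := by
      intro l hl
      calc f '' (compS S l '' γ) = (f ∘ compS S l) '' γ := (image_comp f _ _).symm
        _ = (compS S' l ∘ f) '' γ := image_congr fun x hx => hagree l hl x hx
        _ = compS S' l '' (f '' γ) := image_comp _ f _
        _ = compS S' l '' γ' := by rw [hf.2.2]
    have hcylsub : ∀ l : List ℕ, (∀ j ∈ l, j < m) → compS S l '' γ ⊆ γ := by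
      intro l hl y hy
      rcases hy with ⟨x, hx, rfl⟩
      exact hcmem l hl x hx
    -- the main two-sided estimate
    have hM0 : 0 < M := hγ.1
    have hM'0 : 0 < M' := hγ'.1
    set K₁ : ℝ := 2 * D' * M / (pmin * D) with hK₁def
    set K₂ : ℝ := 2 * D * M' / (pmin * D') with hK₂def
    have hK₁0 : 0 < K₁ :=
      div_pos (mul_pos (mul_pos two_pos hD') hM0) (mul_pos hpmin0 hD)
    have hK₂0 : 0 < K₂ :=
      div_pos (mul_pos (mul_pos two_pos hD) hM'0) (mul_pos hpmin0 hD')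
    have main : ∀ u ∈ Icc (0:ℝ) 1, ∀ v ∈ Icc (0:ℝ) 1, u ≤ v →
        dist (f (g u)) (f (g v)) ≤ K₁ * dist (g u) (g v) ∧
        dist (g u) (g v) ≤ K₂ * dist (f (g u)) (f (g v)) := by
      intro u hu v hv huv
      rcases eq_or_lt_of_le huv with rfl | hlt
      · simp [dist_self]
      obtain ⟨l₁, l₂, c₁, c₂, hl₁, hl₂, hc₁, hc₂, ⟨w₀, hw₀uv, hw₀1, hw₀2⟩,
        hcov, hch₁, hch₂⟩ := LZ_key_pair hLZ hu.1 hlt hv.2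
      have hl₁c : ∀ j ∈ l₁ ++ [c₁], j < m := mem_append_lt hl₁ hc₁
      have hl₂c : ∀ j ∈ l₂ ++ [c₂], j < m := mem_append_lt hl₂ hc₂
      set R₁ : ℝ := ratioProd p l₁ with hR₁def
      set R₂ : ℝ := ratioProd p l₂ with hR₂def
      have hR₁0 : 0 < R₁ := ratioProd_pos fun i hi => (hp i (hl₁ i hi)).1
      have hR₂0 : 0 < R₂ := ratioProd_pos fun i hi => (hp i (hl₂ i hi)).1
      set Rmx : ℝ := max R₁ R₂ with hRmxdef
      have hRmx0 : 0 < Rmx := lt_of_lt_of_le hR₁0 (le_max_left _ _)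
      have hIccsub : Icc u v ⊆ Icc (0:ℝ) 1 := Icc_subset_Icc hu.1 hv.2
      set A : Set (EuclideanSpace ℝ (Fin n)) := g '' Icc u v with hAdef
      have hAγ : A ⊆ γ := by
        rw [hAdef, ← hgimg]
        exact image_mono (f := g) hIccsub
      have hAbd : IsBounded A := hγbd.subset hAγ
      have hfAbd : IsBounded (f '' A) := by
        refine hγ'bd.subset ?_
        rw [hγ'eq]
        exact image_mono (f := f) hAγ
      -- lower bounds on diam A and diam (f '' A) via the inner cylinders
      have hlowA : pmin * Rmx * D ≤ diam A := by
        have key : ∀ (l : List ℕ) (c : ℕ), (∀ j ∈ l, j < m) → c < m →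
            compS T (l ++ [c]) '' Icc 0 1 ⊆ Icc u v →
            pmin * ratioProd p l * D ≤ diam A := by
          intro l c hl hc hch
          have hsub : compS S (l ++ [c]) '' γ ⊆ A := by
            rw [← hgJ (l ++ [c]) (mem_append_lt hl hc), hAdef]
            exact image_mono (f := g) hch
          have h1 : diam (compS S (l ++ [c]) '' γ) ≤ diam A := diam_mono hsub hAbd
          rw [hcylS (l ++ [c]) (mem_append_lt hl hc), ratioProd_append,
            ratioProd_singleton] at h1
          have hRl : 0 < ratioProd p l := ratioProd_pos fun i hi => (hp i (hl i hi)).1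
          have h2 : pmin * ratioProd p l * D ≤ ratioProd p l * p c * D := by
            calc pmin * ratioProd p l * D = pmin * (ratioProd p l * D) := by ring
              _ ≤ p c * (ratioProd p l * D) :=
                mul_le_mul_of_nonneg_right (hpminle c hc) (mul_nonneg hRl.le hD.le)
              _ = ratioProd p l * p c * D := by ring
          linarith
        rcases max_cases R₁ R₂ with ⟨hmax, -⟩ | ⟨hmax, -⟩
        · rw [hRmxdef, hmax]; exact key l₁ c₁ hl₁ hc₁ hch₁
        · rw [hRmxdef, hmax]; exact key l₂ c₂ hl₂ hc₂ hch₂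
      have hlowfA : pmin * Rmx * D' ≤ diam (f '' A) := by
        have key : ∀ (l : List ℕ) (c : ℕ), (∀ j ∈ l, j < m) → c < m →
            compS T (l ++ [c]) '' Icc 0 1 ⊆ Icc u v →
            pmin * ratioProd p l * D' ≤ diam (f '' A) := by
          intro l c hl hc hch
          have hlc := mem_append_lt hl hc
          have hsub : compS S' (l ++ [c]) '' γ' ⊆ f '' A := by
            rw [← hfcyl (l ++ [c]) hlc, ← hgJ (l ++ [c]) hlc]
            refine image_mono (f := f) ?_
            rw [hAdef]
            exact image_mono (f := g) hch
          have h1 : diam (compS S' (l ++ [c]) '' γ') ≤ diam (f '' A) :=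
            diam_mono hsub hfAbd
          rw [hcylS' (l ++ [c]) hlc, ratioProd_append, ratioProd_singleton] at h1
          have hRl : 0 < ratioProd p l := ratioProd_pos fun i hi => (hp i (hl i hi)).1
          have h2 : pmin * ratioProd p l * D' ≤ ratioProd p l * p c * D' := by
            calc pmin * ratioProd p l * D' = pmin * (ratioProd p l * D') := by ring
              _ ≤ p c * (ratioProd p l * D') :=
                mul_le_mul_of_nonneg_right (hpminle c hc) (mul_nonneg hRl.le hD'.le)
              _ = ratioProd p l * p c * D' := by ring
          linarith
        rcases max_cases R₁ R₂ with ⟨hmax, -⟩ | ⟨hmax, -⟩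
        · rw [hRmxdef, hmax]; exact key l₁ c₁ hl₁ hc₁ hch₁
        · rw [hRmxdef, hmax]; exact key l₂ c₂ hl₂ hc₂ hch₂
      -- upper bounds on diam A and diam (f '' A) via the covering pair
      have hgw₀1 : g w₀ ∈ compS S l₁ '' γ := by
        rw [← hgJ l₁ hl₁]; exact mem_image_of_mem g hw₀1
      have hgw₀2 : g w₀ ∈ compS S l₂ '' γ := by
        rw [← hgJ l₂ hl₂]; exact mem_image_of_mem g hw₀2
      have hbd₁ : IsBounded (compS S l₁ '' γ) := hγbd.subset (hcylsub l₁ hl₁)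
      have hbd₂ : IsBounded (compS S l₂ '' γ) := hγbd.subset (hcylsub l₂ hl₂)
      have hupA : diam A ≤ 2 * Rmx * D := by
        have hAsub : A ⊆ (compS S l₁ '' γ) ∪ (compS S l₂ '' γ) := by
          rw [hAdef, ← hgJ l₁ hl₁, ← hgJ l₂ hl₂, ← image_union]
          exact image_mono (f := g) hcov
        have h1 : diam A ≤ diam ((compS S l₁ '' γ) ∪ (compS S l₂ '' γ)) :=
          diam_mono hAsub (hbd₁.union hbd₂)
        have h2 := diam_union hgw₀1 hgw₀2
        rw [dist_self] at h2
        rw [hcylS l₁ hl₁, hcylS l₂ hl₂] at h2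
        have e3 : R₁ * D ≤ Rmx * D := mul_le_mul_of_nonneg_right (le_max_left _ _) hD.le
        have e4 : R₂ * D ≤ Rmx * D := mul_le_mul_of_nonneg_right (le_max_right _ _) hD.le
        linarith
      have hupfA : diam (f '' A) ≤ 2 * Rmx * D' := by
        have hAsub : f '' A ⊆ (compS S' l₁ '' γ') ∪ (compS S' l₂ '' γ') := by
          rw [← hfcyl l₁ hl₁, ← hfcyl l₂ hl₂, ← image_union]
          refine image_mono (f := f) ?_
          rw [hAdef, ← hgJ l₁ hl₁, ← hgJ l₂ hl₂, ← image_union]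
          exact image_mono (f := g) hcov
        have hbd₁' : IsBounded (compS S' l₁ '' γ') := by
          rw [← hfcyl l₁ hl₁]
          exact hγ'bd.subset (by rw [hγ'eq]; exact image_mono (f := f) (hcylsub l₁ hl₁))
        have hbd₂' : IsBounded (compS S' l₂ '' γ') := by
          rw [← hfcyl l₂ hl₂]
          exact hγ'bd.subset (by rw [hγ'eq]; exact image_mono (f := f) (hcylsub l₂ hl₂))
        have h1 : diam (f '' A) ≤ diam ((compS S' l₁ '' γ') ∪ (compS S' l₂ '' γ')) :=
          diam_mono hAsub (hbd₁'.union hbd₂')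
        have hfw₀1 : f (g w₀) ∈ compS S' l₁ '' γ' := by
          rw [← hfcyl l₁ hl₁]; exact mem_image_of_mem f hgw₀1
        have hfw₀2 : f (g w₀) ∈ compS S' l₂ '' γ' := by
          rw [← hfcyl l₂ hl₂]; exact mem_image_of_mem f hgw₀2
        have h2 := diam_union hfw₀1 hfw₀2
        rw [dist_self] at h2
        rw [hcylS' l₁ hl₁, hcylS' l₂ hl₂] at h2
        have e3 : R₁ * D' ≤ Rmx * D' := mul_le_mul_of_nonneg_right (le_max_left _ _) hD'.le
        have e4 : R₂ * D' ≤ Rmx * D' := mul_le_mul_of_nonneg_right (le_max_right _ _) hD'.le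
        linarith
      -- bounded turning
      have hbt : diam A ≤ M * dist (g u) (g v) := by
        have := hγ.2 g hgarc u hu v hv
        rwa [uIcc_of_le huv, ← hAdef] at this
      have hbt' : diam (f '' A) ≤ M' * dist (f (g u)) (f (g v)) := by
        have := hγ'.2 (f ∘ g) hfg u hu v hv
        rwa [uIcc_of_le huv, image_comp, ← hAdef] at this
      have hdle : dist (g u) (g v) ≤ diam A := by
        refine dist_le_diam_of_mem hAbd ?_ ?_
        · exact mem_image_of_mem g (left_mem_Icc.2 huv)
        · exact mem_image_of_mem g (right_mem_Icc.2 huv)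
      have hdle' : dist (f (g u)) (f (g v)) ≤ diam (f '' A) := by
        refine dist_le_diam_of_mem hfAbd ?_ ?_
        · exact mem_image_of_mem f (mem_image_of_mem g (left_mem_Icc.2 huv))
        · exact mem_image_of_mem f (mem_image_of_mem g (right_mem_Icc.2 huv))
      constructor
      · -- dist f ≤ K₁ * dist g
        rw [hK₁def, div_mul_eq_mul_div, le_div_iff₀ (by positivity)]
        -- dist f * (pmin*D) ≤ 2*D'*M * dist g
        have e1 : dist (f (g u)) (f (g v)) * (pmin * D) ≤ 2 * Rmx * D' * (pmin * D) :=
          mul_le_mul_of_nonneg_right (le_trans hdle' hupfA)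
            (mul_nonneg hpmin0.le hD.le)
        have e2 : pmin * Rmx * D ≤ M * dist (g u) (g v) := le_trans hlowA hbt
        have e3 : (2 * D') * (pmin * Rmx * D) ≤ (2 * D') * (M * dist (g u) (g v)) :=
          mul_le_mul_of_nonneg_left e2 (by linarith only [hD'])
        linarith only [e1, e3]
      · rw [hK₂def, div_mul_eq_mul_div, le_div_iff₀ (by positivity)]
        have e1 : dist (g u) (g v) * (pmin * D') ≤ 2 * Rmx * D * (pmin * D') :=
          mul_le_mul_of_nonneg_right (le_trans hdle hupA)
            (mul_nonneg hpmin0.le hD'.le)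
        have e2 : pmin * Rmx * D' ≤ M' * dist (f (g u)) (f (g v)) := le_trans hlowfA hbt'
        have e3 : (2 * D) * (pmin * Rmx * D') ≤ (2 * D) * (M' * dist (f (g u)) (f (g v))) :=
          mul_le_mul_of_nonneg_left e2 (by linarith only [hD])
        linarith only [e1, e3]
    -- conclude
    refine ⟨max 1 (max K₁ K₂), le_max_left _ _, ?_⟩
    intro x hx y hy
    rw [← hgimg] at hx hy
    obtain ⟨u, hu, rfl⟩ := hx
    obtain ⟨v, hv, rfl⟩ := hy
    set C := max 1 (max K₁ K₂) with hCdef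
    have hC0 : 0 < C := lt_of_lt_of_le one_pos (le_max_left _ _)
    have hCK₁ : K₁ ≤ C := le_trans (le_max_left _ _) (le_max_right _ _)
    have hCK₂ : K₂ ≤ C := le_trans (le_max_right _ _) (le_max_right _ _)
    have hmain2 : dist (f (g u)) (f (g v)) ≤ K₁ * dist (g u) (g v) ∧
        dist (g u) (g v) ≤ K₂ * dist (f (g u)) (f (g v)) := by
      rcases le_total u v with huv | hvu
      · exact main u hu v hv huv
      · have := main v hv u hu hvu
        rw [dist_comm (g v) (g u), dist_comm (f (g v)) (f (g u))] at this
        exact this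
    constructor
    · -- C⁻¹ * dist ≤ dist f
      rw [inv_mul_le_iff₀ hC0]
      calc dist (g u) (g v) ≤ K₂ * dist (f (g u)) (f (g v)) := hmain2.2
        _ ≤ C * dist (f (g u)) (f (g v)) :=
          mul_le_mul_of_nonneg_right hCK₂ dist_nonneg
    · calc dist (f (g u)) (f (g v)) ≤ K₁ * dist (g u) (g v) := hmain2.1
        _ ≤ C * dist (g u) (g v) := mul_le_mul_of_nonneg_right hCK₁ dist_nonneg
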